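/- The sets 𝔄₁ = {O, diag(−1/2, 1), diag(−2, 2)} and 𝔄₂ = {O, diag(5/2, 1), diag(3, 2)} are both polyconvex subsets of M^{2×2}, where O = diag(0,0). -/
import Mathlib


open Matrix

noncomputable section

/-- A set `𝔄 ⊆ M^{2×2}` is polyconvex if there is a convex set `𝔠 ⊆ M^{2×2} × ℝ` such that
`𝔄 = {Λ : (Λ, det Λ) ∈ 𝔠}`. -/
def IsPolyconvexSet (A : Set (Matrix (Fin 2) (Fin 2) ℝ)) : Prop :=
  ∃ C : Set (Matrix (Fin 2) (Fin 2) ℝ × ℝ), Convex ℝ C ∧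
    A = {Λ : Matrix (Fin 2) (Fin 2) ℝ | (Λ, Λ.det) ∈ C}

lemma mem_convexHull_triple {E : Type*} [AddCommGroup E] [Module ℝ E] {a b c x : E}
    (h : x ∈ convexHull ℝ ({a, b, c} : Set E)) :
    ∃ t0 t1 t2 : ℝ, 0 ≤ t0 ∧ 0 ≤ t1 ∧ 0 ≤ t2 ∧ t0 + t1 + t2 = 1 ∧
      x = t0 • a + t1 • b + t2 • c := by
  rw [convexHull_insert (by simp : ({b, c} : Set E).Nonempty), mem_convexJoin] at h
  obtain ⟨a', ha', z, hz, hx⟩ := h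
  rw [Set.mem_singleton_iff] at ha'; subst ha'
  rw [convexHull_pair] at hz
  obtain ⟨u, v, hu, hv, huv, rfl⟩ := hz
  obtain ⟨s, t, hs, ht, hst, rfl⟩ := hx
  refine ⟨s, t * u, t * v, hs, mul_nonneg ht hu, mul_nonneg ht hv, by nlinarith, ?_⟩
  simp only [smul_add, mul_smul]
  abel

lemma polyconvex_triple (a1 b1 a2 b2 : ℝ)
    (key : ∀ t1 t2 : ℝ, 0 ≤ t1 → 0 ≤ t2 → t1 + t2 ≤ 1 →
      (t1*a1 + t2*a2) * (t1*b1 + t2*b2) = t1*(a1*b1) + t2*(a2*b2) →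
      (1-t1-t2)*t1 = 0 ∧ (1-t1-t2)*t2 = 0 ∧ t1*t2 = 0) :
    IsPolyconvexSet {0, Matrix.diagonal ![a1, b1], Matrix.diagonal ![a2, b2]} := by
  set M1 := Matrix.diagonal ![a1, b1] with hM1
  set M2 := Matrix.diagonal ![a2, b2] with hM2
  have hd1 : M1.det = a1 * b1 := by
    simp [hM1, Matrix.det_fin_two, Matrix.diagonal]
  have hd2 : M2.det = a2 * b2 := by
    simp [hM2, Matrix.det_fin_two, Matrix.diagonal]
  refine ⟨convexHull ℝ {((0 : Matrix (Fin 2) (Fin 2) ℝ), (0:ℝ)), (M1, a1*b1), (M2, a2*b2)},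
    convex_convexHull _ _, ?_⟩
  ext Λ
  simp only [Set.mem_insert_iff, Set.mem_singleton_iff, Set.mem_setOf_eq]
  constructor
  · rintro (rfl | rfl | rfl)
    · have h : det (0 : Matrix (Fin 2) (Fin 2) ℝ) = 0 := by simp
      rw [h]; exact subset_convexHull _ _ (by simp)
    · rw [hd1]; exact subset_convexHull _ _ (by simp)
    · rw [hd2]; exact subset_convexHull _ _ (by simp)
  · intro h
    obtain ⟨t0, t1, t2, ht0, ht1, ht2, hsum, hx⟩ := mem_convexHull_triple h
    have h1 : Λ = t0 • (0 : Matrix (Fin 2) (Fin 2) ℝ) + t1 • M1 + t2 • M2 := by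
      have := congrArg Prod.fst hx; simpa using this
    have h2 : Λ.det = t1 * (a1*b1) + t2 * (a2*b2) := by
      have := congrArg Prod.snd hx; simpa [smul_eq_mul] using this
    have hdet : Λ.det = (t1*a1 + t2*a2) * (t1*b1 + t2*b2) := by
      rw [h1]
      simp [hM1, hM2, Matrix.det_fin_two, Matrix.diagonal, Matrix.add_apply, Matrix.smul_apply]
    have heq := hdet.symm.trans h2
    obtain ⟨h01, h02, h12⟩ := key t1 t2 ht1 ht2 (by linarith) heq
    have ht0' : t0 = 1 - t1 - t2 := by linarith
    rcases mul_eq_zero.1 h12 with h | h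
    · subst h
      rcases mul_eq_zero.1 h02 with h' | h'
      · right; right
        have : t2 = 1 := by have := mul_eq_zero.1 h02; nlinarith [h']
        subst this
        rw [h1]; simp [show t0 = 0 by linarith]
      · subst h'
        left
        rw [h1]; simp
    · subst h
      rcases mul_eq_zero.1 h01 with h' | h'
      · right; left
        have : t1 = 1 := by nlinarith [h']
        subst this
        rw [h1]; simp [show t0 = 0 by linarith]
      · subst h'
        left
        rw [h1]; simp

/-- The sets `𝔄₁ = {O, diag(−1/2, 1), diag(−2, 2)}` and `𝔄₂ = {O, diag(5/2, 1), diag(3, 2)}`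
are both polyconvex subsets of `M^{2×2}`, where `O = diag(0,0)`. -/
theorem isPolyconvexSet_A1_and_A2 :
    IsPolyconvexSet {(0 : Matrix (Fin 2) (Fin 2) ℝ),
      Matrix.diagonal ![-(1 : ℝ)/2, 1], Matrix.diagonal ![(-2 : ℝ), 2]} ∧
    IsPolyconvexSet {(0 : Matrix (Fin 2) (Fin 2) ℝ),
      Matrix.diagonal ![(5 : ℝ)/2, 1], Matrix.diagonal ![(3 : ℝ), 2]} := by
  constructor
  · exact polyconvex_triple (-(1:ℝ)/2) 1 (-2) 2 (by
      intro t1 t2 ht1 ht2 hle heq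
      have hg : (1/2) * ((1-t1-t2)*t1) + 4 * ((1-t1-t2)*t2) + (3/2) * (t1*t2) = 0 := by
        linear_combination heq
      have n1 : 0 ≤ (1-t1-t2)*t1 := mul_nonneg (by linarith) ht1
      have n2 : 0 ≤ (1-t1-t2)*t2 := mul_nonneg (by linarith) ht2
      have n3 : 0 ≤ t1*t2 := mul_nonneg ht1 ht2
      exact ⟨by linarith, by linarith, by linarith⟩)
  · exact polyconvex_triple ((5:ℝ)/2) 1 3 2 (by
      intro t1 t2 ht1 ht2 hle heq
      have hg : (5/2) * ((1-t1-t2)*t1) + 6 * ((1-t1-t2)*t2) + (1/2) * (t1*t2) = 0 := by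
        linear_combination -heq
      have n1 : 0 ≤ (1-t1-t2)*t1 := mul_nonneg (by linarith) ht1
      have n2 : 0 ≤ (1-t1-t2)*t2 := mul_nonneg (by linarith) ht2
      have n3 : 0 ≤ t1*t2 := mul_nonneg ht1 ht2
      exact ⟨by linarith, by linarith, by linarith⟩)
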